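/- Passivity preservation for the amplifier kernel: if r : ℕ → ℝ≥0 is a finitely supported nonincreasing probability distribution, then the pushed-forward distribution q_n = Σ_{k=0}^n r_k C(n,n−k) t^{n−k} (1-t)^{k+1} is nonincreasing in n, for any t ∈ [0,1). -/

import Mathlib

open scoped NNReal BigOperators

theorem amplifier_passive_preserving
    (t : ℝ) (ht0 : 0 ≤ t) (ht1 : t < 1)
    (N : ℕ) (r : ℕ → ℝ≥0)
    (hmono : ∀ k : ℕ, r (k + 1) ≤ r k)
    (hrN : ∀ i, N < i → r i = 0)
    (hr1 : ∑ i ∈ Finset.range (N + 1), r i = 1) :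
    ∀ n : ℕ,
      ∑ k ∈ Finset.range (n + 2), (r k : ℝ) * ((n + 1).choose (n + 1 - k)) * t ^ (n + 1 - k) * (1 - t) ^ (k + 1)
        ≤ ∑ k ∈ Finset.range (n + 1), (r k : ℝ) * (n.choose (n - k)) * t ^ (n - k) * (1 - t) ^ (k + 1) := by
  intro n
  set s : ℝ := 1 - t with hs
  have hs0 : 0 ≤ s := by simp [hs]; linarith
  -- rewrite via choose symmetry
  have hq : ∀ m, ∑ k ∈ Finset.range (m+1), (r k : ℝ) * (m.choose (m-k)) * t^(m-k) * s^(k+1)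
      = ∑ k ∈ Finset.range (m+1), (r k : ℝ) * (m.choose k) * t^(m-k) * s^(k+1) := by
    intro m
    refine Finset.sum_congr rfl fun k hk => ?_
    rw [Nat.choose_symm (Nat.lt_succ_iff.mp (Finset.mem_range.mp hk))]
  have key :
      ∑ k ∈ Finset.range (n + 2), (r k : ℝ) * ((n + 1).choose k) * t ^ (n + 1 - k) * s ^ (k + 1)
        ≤ ∑ k ∈ Finset.range (n + 1), (r k : ℝ) * (n.choose k) * t ^ (n - k) * s ^ (k + 1) := by
    set Q : ℝ := ∑ k ∈ Finset.range (n + 1), (r k : ℝ) * (n.choose k) * t ^ (n - k) * s ^ (k + 1) with hQ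
    rw [Finset.sum_range_succ'
      (fun k => (r k : ℝ) * ((n + 1).choose k) * t ^ (n + 1 - k) * s ^ (k + 1)) (n + 1)]
    have hsplit : ∀ j ∈ Finset.range (n+1),
        (r (j+1) : ℝ) * ((n + 1).choose (j+1)) * t ^ (n + 1 - (j+1)) * s ^ ((j+1) + 1)
          = (r (j+1) : ℝ) * (n.choose j) * t ^ (n - j) * s ^ (j + 2)
            + (r (j+1) : ℝ) * (n.choose (j+1)) * t ^ (n - j) * s ^ (j + 2) := by
      intro j hj
      have : n + 1 - (j + 1) = n - j := by omega
      rw [this, Nat.choose_succ_succ]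
      push_cast
      ring
    rw [Finset.sum_congr rfl hsplit, Finset.sum_add_distrib]
    have h1 : ∑ j ∈ Finset.range (n+1), (r (j+1) : ℝ) * (n.choose j) * t ^ (n - j) * s ^ (j + 2)
        ≤ s * Q := by
      rw [hQ, Finset.mul_sum]
      refine Finset.sum_le_sum fun j hj => ?_
      have hr : (r (j+1) : ℝ) ≤ (r j : ℝ) := by exact_mod_cast hmono j
      have hpos : (0:ℝ) ≤ (n.choose j : ℝ) * t ^ (n - j) * s ^ (j + 2) := by positivity
      calc (r (j+1) : ℝ) * (n.choose j) * t ^ (n - j) * s ^ (j + 2)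
          ≤ (r j : ℝ) * (n.choose j) * t ^ (n - j) * s ^ (j + 2) := by nlinarith
        _ = s * ((r j : ℝ) * (n.choose j) * t ^ (n - j) * s ^ (j + 1)) := by ring
    have h2 : (∑ j ∈ Finset.range (n+1), (r (j+1) : ℝ) * (n.choose (j+1)) * t ^ (n - j) * s ^ (j + 2))
        + (r 0 : ℝ) * ((n + 1).choose 0) * t ^ (n + 1 - 0) * s ^ (0 + 1) = t * Q := by
      rw [hQ, Finset.mul_sum]
      rw [Finset.sum_range_succ
        (fun j => (r (j+1) : ℝ) * (n.choose (j+1)) * t ^ (n - j) * s ^ (j + 2)) n]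
      rw [Finset.sum_range_succ'
        (fun k => t * ((r k : ℝ) * (n.choose k) * t ^ (n - k) * s ^ (k + 1))) n]
      have hz : (n.choose (n+1) : ℝ) = 0 := by
        exact_mod_cast congrArg (Nat.cast (R := ℝ)) (Nat.choose_succ_self n)
      rw [hz]
      have hcong : ∀ j ∈ Finset.range n,
          (r (j+1) : ℝ) * (n.choose (j+1)) * t ^ (n - j) * s ^ (j + 2)
            = t * ((r (j+1) : ℝ) * (n.choose (j+1)) * t ^ (n - (j+1)) * s ^ ((j+1) + 1)) := by
        intro j hj
        have hj' : j < n := Finset.mem_range.mp hj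
        have : n - j = (n - (j+1)) + 1 := by omega
        rw [this, pow_succ]
        ring
      rw [Finset.sum_congr rfl hcong]
      have : t ^ (n + 1 - 0) = t * t ^ (n - 0) := by
        rw [Nat.sub_zero, Nat.sub_zero, pow_succ]; ring
      rw [this]
      simp only [Nat.choose_zero_right, Nat.cast_one, mul_zero, zero_mul, add_zero]
      ring
    calc (∑ j ∈ Finset.range (n+1), (r (j+1) : ℝ) * (n.choose j) * t ^ (n - j) * s ^ (j + 2))
          + (∑ j ∈ Finset.range (n+1), (r (j+1) : ℝ) * (n.choose (j+1)) * t ^ (n - j) * s ^ (j + 2))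
          + (r 0 : ℝ) * ((n + 1).choose 0) * t ^ (n + 1 - 0) * s ^ (0 + 1)
        = (∑ j ∈ Finset.range (n+1), (r (j+1) : ℝ) * (n.choose j) * t ^ (n - j) * s ^ (j + 2))
          + ((∑ j ∈ Finset.range (n+1), (r (j+1) : ℝ) * (n.choose (j+1)) * t ^ (n - j) * s ^ (j + 2))
            + (r 0 : ℝ) * ((n + 1).choose 0) * t ^ (n + 1 - 0) * s ^ (0 + 1)) := by ring
      _ ≤ s * Q + t * Q := by rw [h2]; exact add_le_add_left h1 _
      _ = Q := by rw [hs]; ring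
  calc ∑ k ∈ Finset.range (n + 2), (r k : ℝ) * ((n + 1).choose (n + 1 - k)) * t ^ (n + 1 - k) * s ^ (k + 1)
      = ∑ k ∈ Finset.range (n + 2), (r k : ℝ) * ((n + 1).choose k) * t ^ (n + 1 - k) * s ^ (k + 1) := hq (n+1)
    _ ≤ ∑ k ∈ Finset.range (n + 1), (r k : ℝ) * (n.choose k) * t ^ (n - k) * s ^ (k + 1) := key
    _ = ∑ k ∈ Finset.range (n + 1), (r k : ℝ) * (n.choose (n - k)) * t ^ (n - k) * s ^ (k + 1) := (hq n).symm
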